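/- Let M be a commutative monoid, let M̃ = {x ∈ M : there exist an integer n ≥ 1 and y ∈ M with n·x + y = y} (the quasi-torsion submonoid of M), and let R = ⊕_{m∈M} R_m be an M-graded commutative ring. Then every idempotent element of R is contained in the subring ⊕_{m∈M̃} R_m. -/

import Mathlib

open Finsupp


section aux
variable {R : Type*} [CommRing R]

lemma idem_eq_of_nilpotent_sub {e f : R} (he : IsIdempotentElem e) (hf : IsIdempotentElem f)
    (h : IsNilpotent (e - f)) : e = f := by
  have h1 : e * e = e := he
  have h2 : f * f = f := hf
  have key : (e - f) ^ 3 = e - f := by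
    linear_combination (e + 1 - 3*f) * h1 + (3*e - 1 - f) * h2
  have keyk : ∀ k : ℕ, (e - f) ^ (2*k+1) = e - f := by
    intro k
    induction k with
    | zero => simp
    | succ k ih =>
      have h4 : 2*(k+1)+1 = (2*k+1) + 2 := by ring
      rw [h4, pow_add, ih]
      calc (e-f) * (e-f)^2 = (e-f)^3 := by ring
        _ = e - f := key
  obtain ⟨n, hn⟩ := h
  have h5 : e - f = 0 := by
    rw [← keyk n]
    calc (e-f)^(2*n+1) = (e-f)^n * (e-f)^(n+1) := by ring
      _ = 0 := by rw [hn]; ring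
  linear_combination h5

lemma exists_idem_lift : ∀ n : ℕ, ∀ {R : Type*} [CommRing R], ∀ a : R, (a*a-a)^n = 0 →
    ∃ e : R, IsIdempotentElem e ∧ IsNilpotent (e - a) := by
  intro n
  induction n using Nat.strong_induction_on with
  | _ n ih =>
    intro R _ a ha
    rcases n with _ | _ | n
    · refine ⟨0, by simp [IsIdempotentElem], ⟨1, ?_⟩⟩
      have h0 : (1:R) = 0 := by simpa using ha
      calc (0 - a)^1 = (0-a)^1 * 1 := by ring
        _ = 0 := by rw [h0]; ring
    · refine ⟨a, ?_, ⟨1, by simp⟩⟩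
      have h0 : a*a - a = 0 := by simpa using ha
      unfold IsIdempotentElem
      linear_combination h0
    · set b := 3*a^2 - 2*a^3 with hb
      have hbb : b*b - b = (a*a-a)^2 * (4*a^2-4*a-3) := by rw [hb]; ring
      have hbn : (b*b-b)^(n+1) = 0 := by
        rw [hbb, mul_pow, ← pow_mul]
        have h2 : 2*(n+1) = (n+2) + n := by ring
        rw [h2, pow_add, ha]
        ring
      obtain ⟨e, he, hen⟩ := ih (n+1) (by omega) b hbn
      refine ⟨e, he, ?_⟩
      have h6 : e - a = (e - b) + (b - a) := by ring
      rw [h6]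
      refine Commute.isNilpotent_add (Commute.all _ _) hen ?_
      have h7 : b - a = (a*a - a) * (1 - 2*a) := by rw [hb]; ring
      rw [h7]
      exact Commute.isNilpotent_mul_right (Commute.all _ _) ⟨n+2, by rw [← ha]⟩

end aux


noncomputable def amaMapRange {R S : Type*} [CommRing R] [CommRing S] (f : R →+* S)
    {G : Type*} [AddCommMonoid G] : AddMonoidAlgebra R G →+* AddMonoidAlgebra S G :=
  AddMonoidAlgebra.liftNCRingHom
    ((AddMonoidAlgebra.singleZeroRingHom : S →+* AddMonoidAlgebra S G).comp f)
    (AddMonoidAlgebra.of S G) (fun _ _ => Commute.all _ _)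

lemma amaMapRange_single {R S : Type*} [CommRing R] [CommRing S] (f : R →+* S)
    {G : Type*} [AddCommMonoid G] (a : G) (b : R) :
    amaMapRange f (AddMonoidAlgebra.single a b) = AddMonoidAlgebra.single a (f b) := by
  show AddMonoidAlgebra.liftNC _ _ _ = _
  rw [AddMonoidAlgebra.liftNC_single]
  show AddMonoidAlgebra.single 0 (f b) * AddMonoidAlgebra.single a 1 = _
  rw [AddMonoidAlgebra.single_mul_single]
  simp

lemma amaMapRange_apply {R S : Type*} [CommRing R] [CommRing S] (f : R →+* S)
    {G : Type*} [AddCommMonoid G] (F : AddMonoidAlgebra R G) (d : G) :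
    (amaMapRange f F).coeff d = f (F.coeff d) := by
  classical
  induction F using AddMonoidAlgebra.induction_linear with
  | zero => simp
  | add x y hx hy =>
    rw [map_add]
    rw [AddMonoidAlgebra.coeff_add, Finsupp.add_apply, hx, hy, ← map_add]
    rfl
  | single a b =>
    rw [amaMapRange_single]
    rw [AddMonoidAlgebra.coeff_single, AddMonoidAlgebra.coeff_single, Finsupp.single_apply, Finsupp.single_apply]
    split <;> simp

lemma single_zero_nilpotent {R : Type*} [CommRing R] {x : R}
    (h : IsNilpotent (AddMonoidAlgebra.single (0:ℤ) x : AddMonoidAlgebra R ℤ)) :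
    IsNilpotent x := by
  obtain ⟨k, hk⟩ := h
  refine ⟨k, ?_⟩
  rw [AddMonoidAlgebra.single_pow] at hk
  exact (AddMonoidAlgebra.single_eq_zero).mp hk

lemma single_nilpotent {R : Type*} [CommRing R] {x : R} (h : IsNilpotent x) (d : ℤ) :
    IsNilpotent (AddMonoidAlgebra.single d x : AddMonoidAlgebra R ℤ) := by
  obtain ⟨k, hk⟩ := h
  exact ⟨k, by rw [AddMonoidAlgebra.single_pow, hk]; simp⟩

lemma laurent_idem_apply {R : Type*} [CommRing R] {F : AddMonoidAlgebra R ℤ}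
    (hF : F * F = F) {d : ℤ} (hd : d ≠ 0) : F.coeff d = 0 := by
  classical
  -- Step 1: coefficients at nonzero degrees are nilpotent
  have hnil : ∀ d' : ℤ, d' ≠ 0 → IsNilpotent (F.coeff d') := by
    intro d' hd'
    rw [← mem_nilradical, nilradical_eq_sInf, Submodule.mem_sInf]
    intro p hp
    haveI : Ideal.IsPrime p := hp
    set φ := amaMapRange (Ideal.Quotient.mk p) (G := ℤ)
    have hG : φ F * φ F = φ F := by rw [← map_mul, hF]
    have hcase : φ F = 0 ∨ φ F = 1 := by
      have h0 : φ F * (φ F - 1) = 0 := by ring_nf; linear_combination hG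
      rcases mul_eq_zero.mp h0 with h | h
      · exact Or.inl h
      · exact Or.inr (by linear_combination h)
    have hz : (φ F).coeff d' = 0 := by
      rcases hcase with h | h
      · rw [h]; rfl
      · rw [h]
        show (AddMonoidAlgebra.single (0:ℤ) (1 : R ⧸ p) : AddMonoidAlgebra (R ⧸ p) ℤ).coeff d' = 0
        rw [AddMonoidAlgebra.coeff_single, Finsupp.single_apply, if_neg (by omega)]
    rw [amaMapRange_apply] at hz
    exact Ideal.Quotient.eq_zero_iff_mem.mp hz
  -- Step 2: N nilpotent
  set c := F.coeff 0 with hc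
  set N : AddMonoidAlgebra R ℤ := F - AddMonoidAlgebra.single 0 c with hN
  have hFsum : F = ∑ d' ∈ F.coeff.support, AddMonoidAlgebra.single d' (F.coeff d') := by
    conv_lhs => rw [← AddMonoidAlgebra.sum_coeff_single F]
    rfl
  have hNsum : N = ∑ d' ∈ F.coeff.support.erase 0, AddMonoidAlgebra.single d' (F.coeff d') := by
    by_cases h0 : (0:ℤ) ∈ F.coeff.support
    · rw [hN]
      conv_lhs => rw [hFsum]
      rw [← Finset.add_sum_erase _ _ h0]
      ring
    · rw [hN, Finset.erase_eq_of_notMem h0]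
      have hc0 : c = 0 := Finsupp.notMem_support_iff.mp h0
      rw [hc0]
      simp only [AddMonoidAlgebra.single_zero, sub_zero]
      exact hFsum
  have hNnil : IsNilpotent N := by
    rw [hNsum]
    refine isNilpotent_sum fun d' hd' => ?_
    exact single_nilpotent (hnil d' (Finset.ne_of_mem_erase hd')) d'
  -- Step 3: c*c - c nilpotent
  have hcc : IsNilpotent (c*c - c) := by
    apply single_zero_nilpotent (R := R)
    have hkey : (AddMonoidAlgebra.single (0:ℤ) (c*c-c) : AddMonoidAlgebra R ℤ)
        = (N + 1 - 2*F) * N := by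
      have h1 : (AddMonoidAlgebra.single (0:ℤ) (c*c-c) : AddMonoidAlgebra R ℤ)
          = AddMonoidAlgebra.single 0 c * AddMonoidAlgebra.single 0 c
            - AddMonoidAlgebra.single 0 c := by
        rw [AddMonoidAlgebra.single_mul_single]
        simp only [add_zero]
        rw [← AddMonoidAlgebra.single_sub]
      have h2 : (AddMonoidAlgebra.single (0:ℤ) c : AddMonoidAlgebra R ℤ) = F - N := by
        rw [hN]; ring
      rw [h1, h2]
      linear_combination (1 : AddMonoidAlgebra R ℤ) * hF
    rw [hkey]
    exact Commute.isNilpotent_mul_left (Commute.all _ _) hNnil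
  -- Step 4: lift
  obtain ⟨k0, hk0⟩ := hcc
  obtain ⟨e, he, hen⟩ := exists_idem_lift k0 c hk0
  -- Step 5
  have hFe : (AddMonoidAlgebra.single (0:ℤ) e : AddMonoidAlgebra R ℤ) = F := by
    apply idem_eq_of_nilpotent_sub
    · show _ * _ = _
      rw [AddMonoidAlgebra.single_mul_single, he]
      norm_num
    · exact hF
    · have : (AddMonoidAlgebra.single (0:ℤ) e : AddMonoidAlgebra R ℤ) - F
          = AddMonoidAlgebra.single 0 (e - c) - N := by
        simp only [AddMonoidAlgebra.single_sub, hN]; ring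
      rw [this, sub_eq_add_neg]
      refine Commute.isNilpotent_add (Commute.all _ _) (single_nilpotent hen 0) hNnil.neg
  rw [← hFe, AddMonoidAlgebra.coeff_single, Finsupp.single_apply, if_neg (by omega)]


lemma exists_functional {M : Type*} [AddCommMonoid M] [DecidableEq M] (D : Finset M) (m : M)
    (hm : m ∈ D) (h : ¬ ∃ n : ℕ, 1 ≤ n ∧ ∃ y : M, n • m + y = y) :
    ∃ θ : M → ℤ, (∀ a ∈ D, ∀ b ∈ D, θ (a + b) = θ a + θ b) ∧ θ m ≠ 0 := by
  classical
  set ι := {x // x ∈ D}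
  set σn : (ι → ℕ) → M := fun u => ∑ i : ι, u i • (i : M) with hσn
  have σadd : ∀ u v : ι → ℕ, σn (u + v) = σn u + σn v := by
    intro u v
    rw [hσn]
    simp only [Pi.add_apply, add_smul]
    rw [Finset.sum_add_distrib]
  have σsingle : ∀ (j : ι) (c : ℕ), σn (Pi.single j c) = c • (j : M) := by
    intro j c
    rw [hσn]
    simp only []
    rw [Finset.sum_eq_single j]
    · simp
    · intro i _ hij
      rw [Pi.single_eq_of_ne hij]
      simp
    · intro hj
      exact absurd (Finset.mem_univ j) hj
  -- the relations submodule
  set L : Submodule ℤ (ι → ℤ) := AddSubgroup.toIntSubmodule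
    { carrier := {w | ∃ u v : ι → ℕ, (∀ i, (u i : ℤ) - v i = w i) ∧ ∃ y : M, σn u + y = σn v + y}
      zero_mem' := ⟨0, 0, fun i => by simp, 0, rfl⟩
      add_mem' := by
        rintro w₁ w₂ ⟨u₁, v₁, hw₁, y₁, hy₁⟩ ⟨u₂, v₂, hw₂, y₂, hy₂⟩
        refine ⟨u₁ + u₂, v₁ + v₂, fun i => ?_, y₁ + y₂, ?_⟩
        · simp only [Pi.add_apply, Nat.cast_add]
          rw [← hw₁ i, ← hw₂ i]; ring
        · rw [σadd, σadd]
          calc σn u₁ + σn u₂ + (y₁ + y₂) = (σn u₁ + y₁) + (σn u₂ + y₂) := by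
                simp only [add_assoc, add_comm, add_left_comm]
            _ = (σn v₁ + y₁) + (σn v₂ + y₂) := by rw [hy₁, hy₂]
            _ = σn v₁ + σn v₂ + (y₁ + y₂) := by
                simp only [add_assoc, add_comm, add_left_comm]
      neg_mem' := by
        rintro w ⟨u, v, hw, y, hy⟩
        refine ⟨v, u, fun i => ?_, y, hy.symm⟩
        have := hw i
        simp only [Pi.neg_apply]
        omega } with hL
  have hLmem : ∀ w, w ∈ L ↔ ∃ u v : ι → ℕ, (∀ i, (u i : ℤ) - v i = w i) ∧
      ∃ y : M, σn u + y = σn v + y := fun w => Iff.rfl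
  set Q := (ι → ℤ) ⧸ L
  set TQ := Submodule.torsion ℤ Q
  set i₀ : ι := ⟨m, hm⟩
  set δ : ι → ℤ := Pi.single i₀ 1 with hδ
  -- δ is not torsion mod L
  have hδtor : L.mkQ δ ∉ TQ := by
    intro htor
    obtain ⟨k, hk⟩ := htor
    have hk1 : (k : ℤ) • L.mkQ δ = 0 := by rw [← Submonoid.smul_def]; exact hk
    have hk' : (k : ℤ) • δ ∈ L := by
      rw [← Submodule.Quotient.mk_eq_zero L, ← Submodule.mkQ_apply, map_smul, hk1]
    -- wlog k positive using neg closure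
    have hkn : ∀ k' : ℤ, k' ≠ 0 → (k' : ℤ) • δ ∈ L → False := by
      intro k' hk'0 hmem
      have hpos : ∃ n : ℕ, 1 ≤ n ∧ ((n : ℤ) • δ ∈ L) := by
        rcases lt_or_gt_of_ne hk'0 with hneg | hpos
        · refine ⟨k'.natAbs, by omega, ?_⟩
          have : ((k'.natAbs : ℤ)) • δ = -(k' • δ) := by
            rw [← neg_smul]
            congr 1
            omega
          rw [this]
          exact neg_mem hmem
        · refine ⟨k'.natAbs, by omega, ?_⟩
          have : ((k'.natAbs : ℤ)) • δ = k' • δ := by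
            congr 1; omega
          rw [this]; exact hmem
      obtain ⟨n, hn1, hnmem⟩ := hpos
      obtain ⟨u, v, hw, y, hy⟩ := (hLmem _).mp hnmem
      -- u = v + n • δℕ pointwise
      have huv : u = v + Pi.single i₀ n := by
        funext i
        have := hw i
        by_cases hi : i = i₀
        · subst hi
          simp only [hδ, Pi.smul_apply, Pi.single_eq_same, smul_eq_mul, mul_one] at this
          simp only [Pi.add_apply, Pi.single_eq_same]
          omega
        · simp only [hδ, Pi.smul_apply, Pi.single_eq_of_ne hi, smul_eq_mul, mul_zero] at this
          simp only [Pi.add_apply, Pi.single_eq_of_ne hi, add_zero]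
          omega
      rw [huv, σadd, σsingle] at hy
      exact h ⟨n, hn1, σn v + y, by
        have : n • m + (σn v + y) = σn v + n • (i₀ : M) + y := by
          change _ = σn v + n • m + y; abel
        rw [this]
        exact hy⟩
    exact hkn k (nonZeroDivisors.coe_ne_zero k) hk'
  -- build the functional
  haveI : Module.Finite ℤ Q := Module.Finite.of_surjective L.mkQ (Submodule.mkQ_surjective L)
  haveI : Module.Finite ℤ (Q ⧸ TQ) :=
    Module.Finite.of_surjective TQ.mkQ (Submodule.mkQ_surjective TQ)
  haveI : Module.Free ℤ (Q ⧸ TQ) := Module.free_of_finite_type_torsion_free'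
  set q2 : Q ⧸ TQ := TQ.mkQ (L.mkQ δ) with hq2
  have hq2ne : q2 ≠ 0 := by
    intro h0
    exact hδtor ((Submodule.Quotient.mk_eq_zero TQ).mp h0)
  set B := Module.Free.chooseBasis ℤ (Q ⧸ TQ)
  have hrepr : B.repr q2 ≠ 0 := fun h0 => hq2ne (by
    have := B.repr.injective (a₁ := q2) (a₂ := 0) (by rw [h0, map_zero])
    exact this)
  obtain ⟨j, hj⟩ : ∃ j, B.repr q2 j ≠ 0 := by
    by_contra hall
    push_neg at hall
    exact hrepr (Finsupp.ext hall)
  set θlin : (ι → ℤ) →ₗ[ℤ] ℤ := (B.coord j) ∘ₗ TQ.mkQ ∘ₗ L.mkQ with hθlin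
  have hθδ : θlin δ ≠ 0 := by
    rw [hθlin]
    exact hj
  have hθL : ∀ w ∈ L, θlin w = 0 := by
    intro w hw
    rw [hθlin]
    simp only [LinearMap.comp_apply]
    have hz : L.mkQ w = 0 := by rwa [Submodule.mkQ_apply, Submodule.Quotient.mk_eq_zero]
    rw [hz]
    simp
  -- well-definedness
  have wd : ∀ u u' : ι → ℕ, σn u = σn u' →
      θlin (fun i => (u i : ℤ)) = θlin (fun i => (u' i : ℤ)) := by
    intro u u' he
    have hmem : ((fun i => (u i : ℤ)) - (fun i => (u' i : ℤ))) ∈ L :=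
      (hLmem _).mp ⟨u, u', fun i => rfl, 0, by rw [he]⟩
    have := hθL _ hmem
    rw [map_sub] at this
    linarith [this]
  set θ : M → ℤ := fun x =>
    if hx : ∃ u : ι → ℕ, σn u = x then θlin (fun i => ((hx.choose i : ℤ))) else 0 with hθ
  have θval : ∀ u : ι → ℕ, θ (σn u) = θlin (fun i => (u i : ℤ)) := by
    intro u
    rw [hθ]
    dsimp only
    have hx : ∃ u' : ι → ℕ, σn u' = σn u := ⟨u, rfl⟩
    rw [dif_pos hx]
    exact wd hx.choose u hx.choose_spec
  have θD : ∀ a : ι, θ (a : M) = θlin (fun i => ((Pi.single a 1 : ι → ℕ) i : ℤ)) := by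
    intro a
    have : (a : M) = σn (Pi.single a 1) := by rw [σsingle]; simp
    rw [this, θval]
  refine ⟨θ, ?_, ?_⟩
  · intro a ha b hb
    have hab : a + b = σn ((Pi.single (⟨a, ha⟩ : ι) 1 : ι → ℕ) + (Pi.single (⟨b, hb⟩ : ι) 1 : ι → ℕ)) := by
      rw [σadd, σsingle, σsingle]; simp
    rw [hab, θval, θD ⟨a, ha⟩, θD ⟨b, hb⟩]
    have : (fun i => ((((Pi.single (⟨a, ha⟩ : ι) 1 : ι → ℕ) + (Pi.single (⟨b, hb⟩ : ι) 1 : ι → ℕ)) i : ℕ) : ℤ))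
        = (fun i => ((Pi.single (⟨a, ha⟩ : ι) 1 : ι → ℕ) i : ℤ))
          + (fun i => ((Pi.single (⟨b, hb⟩ : ι) 1 : ι → ℕ) i : ℤ)) := by
      funext i; simp
    rw [this, map_add]
  · have : θ m = θlin δ := by
      have h1 := θD i₀
      have h2 : (fun i => ((Pi.single i₀ 1 : ι → ℕ) i : ℤ)) = δ := by
        funext i
        by_cases hi : i = i₀
        · subst hi; simp [hδ]
        · simp [hδ, Pi.single_eq_of_ne hi]
      rw [← h2]
      exact h1
    rw [this]
    exact hθδ

/-- Every idempotent of an `M`-graded commutative ring, with `M` a commutative monoid, is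
contained in the subring `⊕_{m ∈ M̃} R_m`, where `M̃ = {x : ∃ n ≥ 1, ∃ y, n•x + y = y}` is
the quasi-torsion submonoid of `M`: all homogeneous components of the idempotent of degree
outside `M̃` vanish. -/
theorem idempotent_supported_on_quasiTorsion
    {M : Type*} [AddCommMonoid M] [DecidableEq M]
    {R : Type*} [CommRing R] (𝒜 : M → AddSubgroup R) [GradedRing 𝒜]
    (e : R) (he : IsIdempotentElem e) :
    ∀ m : M, (¬ ∃ n : ℕ, 1 ≤ n ∧ ∃ y : M, n • m + y = y) →
      (DirectSum.decompose 𝒜 e m : R) = 0 := by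
  classical
  intro m hm
  set r := DirectSum.decompose 𝒜 e with hr
  set D : Finset M := insert m r.support with hD
  have hmD : m ∈ D := Finset.mem_insert_self _ _
  have hsupp : ∀ a, a ∉ D → (r a : R) = 0 := by
    intro a ha
    have : a ∉ r.support := fun hc => ha (Finset.mem_insert_of_mem hc)
    rw [DFinsupp.notMem_support_iff.mp this]
    rfl
  have hrr : r * r = r := by
    rw [hr, ← DirectSum.decompose_mul, he]
  -- component formula
  have hcomp : ∀ n : M, (r n : R) =
      ∑ ij ∈ (r.support ×ˢ r.support).filter (fun ij : M × M => ij.1 + ij.2 = n),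
        ((r ij.1 : R) * (r ij.2 : R)) := by
    intro n
    conv_lhs => rw [← hrr]
    exact DirectSum.coe_mul_apply 𝒜 r r n
  obtain ⟨θ, θadd, θm⟩ := exists_functional D m hmD hm
  set F : AddMonoidAlgebra R ℤ := ∑ a ∈ D, AddMonoidAlgebra.single (θ a) (r a : R) with hF
  set P : Finset M := (D ×ˢ D).image (fun p : M × M => p.1 + p.2) with hP
  -- (r c : R) as sum over D-pairs
  have hcompD : ∀ n : M, (r n : R) =
      ∑ ij ∈ (D ×ˢ D).filter (fun ij : M × M => ij.1 + ij.2 = n),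
        ((r ij.1 : R) * (r ij.2 : R)) := by
    intro n
    rw [hcomp n]
    apply Finset.sum_subset
    · intro p hp
      simp only [Finset.mem_filter, Finset.mem_product] at hp ⊢
      exact ⟨⟨Finset.mem_insert_of_mem hp.1.1, Finset.mem_insert_of_mem hp.1.2⟩, hp.2⟩
    · intro p hp hnp
      simp only [Finset.mem_filter, Finset.mem_product] at hp hnp
      by_cases h1 : p.1 ∈ r.support
      · have h2 : p.2 ∉ r.support := fun hc => hnp ⟨⟨h1, hc⟩, hp.2⟩
        rw [DFinsupp.notMem_support_iff.mp h2]
        simp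
      · rw [DFinsupp.notMem_support_iff.mp h1]
        simp
  have hPzero : ∀ c, c ∉ P → (r c : R) = 0 := by
    intro c hc
    rw [hcompD c]
    apply Finset.sum_eq_zero
    intro p hp
    exfalso
    simp only [Finset.mem_filter] at hp
    exact hc (Finset.mem_image.mpr ⟨p, hp.1, hp.2⟩)
  have hFF : F * F = F := by
    rw [hF, Finset.sum_mul_sum]
    have step1 : ∀ a ∈ D, ∀ b ∈ D,
        AddMonoidAlgebra.single (θ a) (r a : R) * AddMonoidAlgebra.single (θ b) (r b : R)
          = AddMonoidAlgebra.single (θ (a + b)) ((r a : R) * (r b : R)) := by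
      intro a ha b hb
      rw [AddMonoidAlgebra.single_mul_single, θadd a ha b hb]
    rw [Finset.sum_congr rfl fun a ha => Finset.sum_congr rfl fun b hb => step1 a ha b hb]
    rw [← Finset.sum_product']
    rw [← Finset.sum_fiberwise_of_maps_to (g := fun p : M × M => p.1 + p.2) (t := P)
        (fun p hp => Finset.mem_image_of_mem _ hp)]
    have step2 : ∀ c ∈ P,
        (∑ p ∈ (D ×ˢ D).filter (fun p : M × M => p.1 + p.2 = c),
          AddMonoidAlgebra.single (θ (p.1 + p.2)) ((r p.1 : R) * (r p.2 : R)))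
        = AddMonoidAlgebra.single (θ c) (r c : R) := by
      intro c hc
      have : ∀ p ∈ (D ×ˢ D).filter (fun p : M × M => p.1 + p.2 = c),
          AddMonoidAlgebra.single (θ (p.1 + p.2)) ((r p.1 : R) * (r p.2 : R))
            = AddMonoidAlgebra.single (θ c) ((r p.1 : R) * (r p.2 : R)) := by
        intro p hp
        rw [(Finset.mem_filter.mp hp).2]
      rw [Finset.sum_congr rfl this, hcompD c]
      exact (map_sum (AddMonoidAlgebra.singleAddHom (θ c)) _ _).symm
    rw [Finset.sum_congr rfl step2]
    -- now : ∑ c ∈ P, single (θ c) (r c) = ∑ a ∈ D, single (θ a) (r a)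
    have hPsub : P ⊆ P ∪ D := Finset.subset_union_left
    have hDsub : D ⊆ P ∪ D := Finset.subset_union_right
    rw [Finset.sum_subset hPsub ?h1, Finset.sum_subset hDsub ?h2]
    case h1 =>
      intro c _ hc
      rw [hPzero c hc]
      simp
    case h2 =>
      intro c _ hc
      rw [hsupp c hc]
      simp
  -- conclude
  have hz : F.coeff (θ m) = 0 := laurent_idem_apply hFF θm
  have hsum : (∑ a ∈ D, if θ a = θ m then (r a : R) else 0) = 0 := by
    have hsw : (∑ a ∈ D, AddMonoidAlgebra.single (θ a) (r a : R)).coeff (θ m)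
        = ∑ a ∈ D, (if θ a = θ m then (r a : R) else 0) := by
      rw [AddMonoidAlgebra.coeff_sum, Finset.sum_apply']
      exact Finset.sum_congr rfl fun a _ => by rw [AddMonoidAlgebra.coeff_single]; exact Finsupp.single_apply
    rw [← hsw, ← hF, hz]
  -- project onto degree m
  set π : R →+ R := ((𝒜 m).subtype.comp ((DFinsupp.evalAddMonoidHom m).comp
    (DirectSum.decomposeAddEquiv 𝒜).toAddMonoidHom)) with hπ
  have hπcoe : ∀ a : M, π (r a : R) = if a = m then (r m : R) else 0 := by
    intro a
    rw [hπ]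
    show ((DirectSum.decompose 𝒜 ((r a : R))) m : R) = _
    rw [DirectSum.decompose_coe]
    by_cases ha : a = m
    · subst ha
      rw [DirectSum.of_eq_same]
      simp
    · rw [DirectSum.of_eq_of_ne _ _ _ (Ne.symm ha)]
      simp [ha]
  have := congrArg π hsum
  rw [map_sum, map_zero] at this
  have hterm : ∀ a ∈ D, π (if θ a = θ m then (r a : R) else 0)
      = if a = m then (r m : R) else 0 := by
    intro a _
    rw [apply_ite π, map_zero, hπcoe a]
    by_cases ha : a = m
    · subst ha; simp
    · simp [ha]
  rw [Finset.sum_congr rfl hterm] at this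
  rw [Finset.sum_ite_eq' D m (fun _ => (r m : R)), if_pos hmD] at this
  exact this
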